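/- Let k be even and δ₁ = [[√13, -14/(3√13)],[3√13, -√13]], δ₂ = [[5,-2],[13,-5]], δ₃ = [[-√13, 4/√13],[-7√13/2, √13]], and A = [[(13+√13)/39,(13-√13)/39],[1,1]]. Define g̃(z) = C·z^{-k/2}|_k A⁻¹. Then g̃|δ₁ = (-1)^{k/2} g̃, g̃|δ₂ = (-1)^{k/2} g̃, and g̃|δ₃ = (-1)^{3k/2} g̃ (interpreting (-1)^{k/2} with k/2 ∈ ℤ). -/

import Mathlib

open Complex Matrix

/-- The weight-`k` stroke operator for a real `2×2` matrix `γ` (with positive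
determinant): `(f|γ)(z) = det(γ)^{k/2}(cz+d)^{-k} f((az+b)/(cz+d))`, for `k` even. -/
noncomputable def stroke (k : ℕ) (γ : Matrix (Fin 2) (Fin 2) ℝ) (f : ℂ → ℂ) : ℂ → ℂ :=
  fun z => (γ.det : ℂ) ^ ((k : ℤ) / 2) * ((γ 1 0 : ℂ) * z + (γ 1 1 : ℂ)) ^ (-(k : ℤ)) *
    f (((γ 0 0 : ℂ) * z + (γ 0 1 : ℂ)) / ((γ 1 0 : ℂ) * z + (γ 1 1 : ℂ)))

/-- `δ₁ = [[√13, -14/(3√13)],[3√13, -√13]]`. -/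
noncomputable def δ₁ : Matrix (Fin 2) (Fin 2) ℝ :=
  !![Real.sqrt 13, -14 / (3 * Real.sqrt 13); 3 * Real.sqrt 13, -Real.sqrt 13]

/-- `δ₂ = [[5,-2],[13,-5]]`. -/
noncomputable def δ₂ : Matrix (Fin 2) (Fin 2) ℝ := !![5, -2; 13, -5]

/-- `δ₃ = [[-√13, 4/√13],[-7√13/2, √13]]`. -/
noncomputable def δ₃ : Matrix (Fin 2) (Fin 2) ℝ :=
  !![-Real.sqrt 13, 4 / Real.sqrt 13; -7 * Real.sqrt 13 / 2, Real.sqrt 13]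

/-- `A = [[(13+√13)/39, (13-√13)/39],[1,1]]`. -/
noncomputable def A : Matrix (Fin 2) (Fin 2) ℝ :=
  !![(13 + Real.sqrt 13) / 39, (13 - Real.sqrt 13) / 39; 1, 1]

/-! ### Auxiliary lemmas -/

/-- Explicit form of `A⁻¹`. -/
noncomputable def Bm : Matrix (Fin 2) (Fin 2) ℝ :=
  !![3 * Real.sqrt 13 / 2, (1 - Real.sqrt 13) / 2;
     -(3 * Real.sqrt 13) / 2, (Real.sqrt 13 + 1) / 2]

lemma hs2 : Real.sqrt 13 ^ 2 = 13 := Real.sq_sqrt (by norm_num)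
lemma hsp : (0:ℝ) < Real.sqrt 13 := Real.sqrt_pos.mpr (by norm_num)

lemma A_inv : A⁻¹ = Bm := by
  apply Matrix.inv_eq_left_inv
  have h := hs2
  have hp := hsp
  ext i j
  fin_cases i <;> fin_cases j <;>
    simp [Bm, A, Matrix.mul_apply, Fin.sum_univ_two] <;> nlinarith [h, hp]

lemma prod1 : Bm * δ₁ = !![0, -(1:ℝ); 1, 0] * Bm := by
  have h := hs2
  have hp := hsp
  ext i j
  fin_cases i <;> fin_cases j <;>
    (simp [Bm, δ₁, Matrix.mul_apply, Fin.sum_univ_two]; field_simp; nlinarith [h, hp])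

lemma prod2 : Bm * δ₂ = !![0, -((Real.sqrt 13+2)/3); (Real.sqrt 13-2)/3, 0] * Bm := by
  have h := hs2
  have hp := hsp
  ext i j
  fin_cases i <;> fin_cases j <;>
    (simp [Bm, δ₂, Matrix.mul_apply, Fin.sum_univ_two]; field_simp; nlinarith [h, hp])

lemma prod3 : Bm * δ₃ = -(!![0, -((7-Real.sqrt 13)/6); (Real.sqrt 13+7)/6, 0] * Bm) := by
  have h := hs2
  have hp := hsp
  ext i j
  fin_cases i <;> fin_cases j <;>
    (simp [Bm, δ₃, Matrix.mul_apply, Fin.sum_univ_two]; field_simp; nlinarith [h, hp])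

lemma denom_ne_zero {c : ℝ} (d : ℝ) (hc : c ≠ 0) {z : ℂ} (hz : 0 < z.im) :
    (c : ℂ) * z + (d : ℂ) ≠ 0 := by
  intro h
  have him : ((c:ℂ) * z + (d:ℂ)).im = c * z.im := by simp
  rw [h] at him
  simp only [Complex.zero_im] at him
  rcases mul_eq_zero.mp him.symm with h1 | h2
  · exact hc h1
  · exact hz.ne' h2

lemma mobius_im_pos (a b c d : ℝ) (hdet : 0 < a * d - b * c) {z : ℂ} (hz : 0 < z.im)
    (hq : (c:ℂ) * z + (d:ℂ) ≠ 0) :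
    0 < (((a:ℂ) * z + b) / ((c:ℂ) * z + d)).im := by
  rw [Complex.div_im, div_sub_div_same]
  apply div_pos
  · have : ((a:ℂ)*z+b).im * ((c:ℂ)*z+d).re - ((a:ℂ)*z+b).re * ((c:ℂ)*z+d).im
        = (a*d - b*c) * z.im := by simp; ring
    rw [this]
    exact mul_pos hdet hz
  · exact Complex.normSq_pos.mpr hq

lemma stroke_comp (k : ℕ) (γ δ : Matrix (Fin 2) (Fin 2) ℝ) (f : ℂ → ℂ) (z : ℂ)
    (h2 : ((δ 1 0 : ℂ) * z + (δ 1 1 : ℂ)) ≠ 0)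
    (h3 : (((γ * δ) 1 0 : ℂ) * z + ((γ * δ) 1 1 : ℂ)) ≠ 0) :
    stroke k δ (stroke k γ f) z = stroke k (γ * δ) f z := by
  unfold stroke
  have e : ∀ i j, (((γ * δ) i j : ℝ) : ℂ) = γ i 0 * δ 0 j + γ i 1 * δ 1 j := by
    intro i j
    rw [Matrix.mul_apply, Fin.sum_univ_two]
    push_cast
    ring
  have hdet : (((γ * δ).det : ℝ) : ℂ) = (γ.det : ℂ) * (δ.det : ℂ) := by
    rw [Matrix.det_mul]; push_cast; ring
  set q : ℂ := (δ 1 0 : ℂ) * z + (δ 1 1 : ℂ) with hqdef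
  set P : ℂ := ((γ * δ) 1 0 : ℂ) * z + ((γ * δ) 1 1 : ℂ) with hPdef
  set P' : ℂ := ((γ * δ) 0 0 : ℂ) * z + ((γ * δ) 0 1 : ℂ) with hP'def
  set w : ℂ := ((δ 0 0 : ℂ) * z + (δ 0 1 : ℂ)) / q with hwdef
  have key1 : (γ 1 0 : ℂ) * w + γ 1 1 = P / q := by
    rw [hwdef, hPdef, e 1 0, e 1 1]; field_simp; ring
  have key0 : (γ 0 0 : ℂ) * w + γ 0 1 = P' / q := by
    rw [hwdef, hP'def, e 0 0, e 0 1]; field_simp; ring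
  rw [key1, key0, hdet]
  have harg : P' / q / (P / q) = P' / P := by
    field_simp
  rw [harg]
  have hpow : (P / q) ^ (-(k:ℤ)) = P ^ (-(k:ℤ)) * (q ^ (-(k:ℤ)))⁻¹ := by
    rw [div_zpow, div_eq_mul_inv]
  rw [hpow]
  have hq' : q ^ (-(k:ℤ)) ≠ 0 := zpow_ne_zero _ h2
  rw [mul_zpow]
  field_simp

lemma stroke_neg (k : ℕ) (hk : Even k) (γ : Matrix (Fin 2) (Fin 2) ℝ) (f : ℂ → ℂ) (z : ℂ) :
    stroke k (-γ) f z = stroke k γ f z := by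
  unfold stroke
  have hdet : (((-γ).det : ℝ) : ℂ) = (γ.det : ℂ) := by
    rw [Matrix.det_neg]; norm_num
  have he : ∀ i j, (((-γ) i j : ℝ) : ℂ) = -(γ i j : ℂ) := by intro i j; simp
  rw [hdet, he, he, he, he]
  have h1 : -((γ 1 0 : ℝ) : ℂ) * z + -((γ 1 1 : ℝ) : ℂ) = -(((γ 1 0 : ℝ) : ℂ) * z + (γ 1 1 : ℝ)) := by
    ring
  have h0 : -((γ 0 0 : ℝ) : ℂ) * z + -((γ 0 1 : ℝ) : ℂ) = -(((γ 0 0 : ℝ) : ℂ) * z + (γ 0 1 : ℝ)) := by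
    ring
  rw [h1, h0, neg_div_neg_eq]
  have hke : Even (-(k:ℤ)) := by
    obtain ⟨n, hn⟩ := hk
    exact ⟨-n, by push_cast [hn]; ring⟩
  rw [hke.neg_zpow]

lemma stroke_factor (k : ℕ) (γ : Matrix (Fin 2) (Fin 2) ℝ) (f g : ℂ → ℂ) (e : ℂ) (z : ℂ)
    (h : g (((γ 0 0 : ℂ) * z + (γ 0 1 : ℂ)) / ((γ 1 0 : ℂ) * z + (γ 1 1 : ℂ)))
       = e * f (((γ 0 0 : ℂ) * z + (γ 0 1 : ℂ)) / ((γ 1 0 : ℂ) * z + (γ 1 1 : ℂ)))) :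
    stroke k γ g z = e * stroke k γ f z := by
  unfold stroke; rw [h]; ring

lemma stroke_S (m : ℕ) (b c : ℝ) (hb : b ≠ 0) (hc : c ≠ 0) (Cc : ℂ) (z : ℂ) (hz : z ≠ 0) :
    stroke (2 * m) !![0, -b; c, 0] (fun w => Cc * w ^ (-((2*m : ℕ) : ℂ) / 2)) z
      = (-1 : ℂ) ^ m * (Cc * z ^ (-((2*m : ℕ) : ℂ) / 2)) := by
  have hexp : (-((2*m : ℕ) : ℂ) / 2) = ((-(m : ℤ) : ℤ) : ℂ) := by push_cast; ring
  have hK : ((2 * m : ℕ) : ℤ) / 2 = (m : ℤ) := by omega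
  simp only [stroke, hexp, Complex.cpow_intCast, hK, Matrix.det_fin_two_of, Matrix.of_apply,
    Matrix.cons_val', Matrix.cons_val_zero, Matrix.cons_val_one, Matrix.head_cons,
    Matrix.head_fin_const, Matrix.empty_val', Matrix.cons_val_fin_one]
  have hbz : (b : ℂ) ≠ 0 := by exact_mod_cast hb
  have hcz : (c : ℂ) ≠ 0 := by exact_mod_cast hc
  push_cast
  have f1 : ((0:ℂ) * 0 - -(b:ℂ) * c) ^ (m : ℤ) = ((b:ℂ)*c) ^ m := by
    rw [show ((0:ℂ) * 0 - -(b:ℂ) * c) = (b:ℂ)*c by ring, zpow_natCast]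
  have f2 : ((c:ℂ) * z + 0) ^ (-(2*(m : ℤ))) = (((c:ℂ) * z) ^ (2*m))⁻¹ := by
    rw [add_zero, ← zpow_natCast ((c:ℂ)*z) (2*m), ← _root_.zpow_neg]
    norm_num
  have f3 : ((0:ℂ) * z + -(b:ℂ)) / ((c:ℂ) * z + 0) = -(b:ℂ) / ((c:ℂ)*z) := by ring_nf
  have f4 : (-(b:ℂ) / ((c:ℂ)*z)) ^ (-(m:ℤ)) = ((-(b:ℂ) / ((c:ℂ)*z)) ^ m)⁻¹ := by
    rw [← zpow_natCast (-(b:ℂ) / ((c:ℂ)*z)) m, ← _root_.zpow_neg]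
  have f5 : z ^ (-(m:ℤ)) = (z ^ m)⁻¹ := by
    rw [← zpow_natCast z m, ← _root_.zpow_neg]
  rw [f1, f2, f3, f4, f5]
  have hbase : (-(b:ℂ) / ((c:ℂ) * z)) ≠ 0 :=
    div_ne_zero (neg_ne_zero.mpr hbz) (mul_ne_zero hcz hz)
  field_simp
  have hcz' : (c:ℂ) * z ≠ 0 := mul_ne_zero hcz hz
  rw [div_eq_iff (pow_ne_zero _ (neg_ne_zero.mpr (div_ne_zero hbz hcz'))), neg_pow ((b:ℂ) / ((c:ℂ) * z)), div_pow,
    pow_mul']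
  have hneg : ((-1:ℂ)) ^ m * (-1) ^ m = 1 := by rw [← mul_pow]; norm_num
  have hp : ((c:ℂ) * z) ^ m ≠ 0 := pow_ne_zero _ hcz'
  field_simp
  linear_combination (-((b:ℂ) ^ m * Cc * ((c:ℂ)*z)^m)) * hneg

lemma Bm_det_pos : 0 < Bm 0 0 * Bm 1 1 - Bm 0 1 * Bm 1 0 := by
  have h := hs2
  have hp := hsp
  simp [Bm]
  nlinarith [h, hp]

lemma Bm_c_ne : Bm 1 0 ≠ 0 := by
  have hp := hsp
  norm_num [Bm]

lemma case_main (m : ℕ) (C : ℂ) (δ : Matrix (Fin 2) (Fin 2) ℝ) (b c : ℝ)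
    (hb : b ≠ 0) (hc : c ≠ 0) (hδ10 : δ 1 0 ≠ 0)
    (hM : Bm * δ = !![0, -b; c, 0] * Bm)
    (z : ℂ) (hz : 0 < z.im) :
    stroke (2*m) δ (stroke (2*m) Bm (fun w => C * w ^ (-((2*m : ℕ) : ℂ) / 2))) z
      = (-1:ℂ)^m * stroke (2*m) Bm (fun w => C * w ^ (-((2*m : ℕ) : ℂ) / 2)) z := by
  set f : ℂ → ℂ := fun w => C * w ^ (-((2*m : ℕ) : ℂ) / 2) with hf
  have hp := hsp
  have key10 : (!![0, -b; c, 0] * Bm) 1 0 = c * (3 * Real.sqrt 13 / 2) := by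
    simp [Bm, Matrix.mul_apply, Fin.sum_univ_two]
  have h10 : (!![0, -b; c, 0] * Bm) 1 0 ≠ 0 := by
    rw [key10]; exact mul_ne_zero hc (by positivity)
  have hprod : (((!![0, -b; c, 0] * Bm) 1 0 : ℂ) * z + ((!![0, -b; c, 0] * Bm) 1 1 : ℂ)) ≠ 0 :=
    denom_ne_zero _ h10 hz
  have hδden : ((δ 1 0 : ℂ) * z + (δ 1 1 : ℂ)) ≠ 0 := denom_ne_zero _ hδ10 hz
  have hBden : ((Bm 1 0 : ℂ) * z + (Bm 1 1 : ℂ)) ≠ 0 := denom_ne_zero _ Bm_c_ne hz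
  have step1 : stroke (2*m) δ (stroke (2*m) Bm f) z = stroke (2*m) (Bm * δ) f z :=
    stroke_comp _ _ _ _ _ hδden (by rw [hM]; exact hprod)
  rw [step1, hM, ← stroke_comp _ _ _ f z hBden hprod]
  apply stroke_factor
  have hw : 0 < (((Bm 0 0 : ℂ) * z + (Bm 0 1 : ℂ)) / ((Bm 1 0 : ℂ) * z + (Bm 1 1 : ℂ))).im :=
    mobius_im_pos (Bm 0 0) (Bm 0 1) (Bm 1 0) (Bm 1 1) Bm_det_pos hz hBden
  have hw0 : (((Bm 0 0 : ℂ) * z + (Bm 0 1 : ℂ)) / ((Bm 1 0 : ℂ) * z + (Bm 1 1 : ℂ))) ≠ 0 := by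
    intro h0; rw [h0] at hw; simp at hw
  exact stroke_S m b c hb hc C _ hw0

lemma case_main_neg (m : ℕ) (C : ℂ) (δ : Matrix (Fin 2) (Fin 2) ℝ) (b c : ℝ)
    (hb : b ≠ 0) (hc : c ≠ 0) (hδ10 : δ 1 0 ≠ 0)
    (hM : Bm * δ = -(!![0, -b; c, 0] * Bm))
    (z : ℂ) (hz : 0 < z.im) :
    stroke (2*m) δ (stroke (2*m) Bm (fun w => C * w ^ (-((2*m : ℕ) : ℂ) / 2))) z
      = (-1:ℂ)^m * stroke (2*m) Bm (fun w => C * w ^ (-((2*m : ℕ) : ℂ) / 2)) z := by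
  set f : ℂ → ℂ := fun w => C * w ^ (-((2*m : ℕ) : ℂ) / 2) with hf
  have hp := hsp
  have key10 : (!![0, -b; c, 0] * Bm) 1 0 = c * (3 * Real.sqrt 13 / 2) := by
    simp [Bm, Matrix.mul_apply, Fin.sum_univ_two]
  have h10 : (!![0, -b; c, 0] * Bm) 1 0 ≠ 0 := by
    rw [key10]; exact mul_ne_zero hc (by positivity)
  have hprod : (((!![0, -b; c, 0] * Bm) 1 0 : ℂ) * z + ((!![0, -b; c, 0] * Bm) 1 1 : ℂ)) ≠ 0 :=
    denom_ne_zero _ h10 hz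
  have hprodneg : (((-(!![0, -b; c, 0] * Bm)) 1 0 : ℂ) * z + ((-(!![0, -b; c, 0] * Bm)) 1 1 : ℂ)) ≠ 0 := by
    simp only [Matrix.neg_apply, Complex.ofReal_neg]
    intro h
    apply hprod
    have h' : -((((!![0, -b; c, 0] * Bm) 1 0 : ℝ) : ℂ) * z + (((!![0, -b; c, 0] * Bm) 1 1 : ℝ) : ℂ)) = 0 := by
      rw [← h]; ring
    exact neg_eq_zero.mp h'
  have hδden : ((δ 1 0 : ℂ) * z + (δ 1 1 : ℂ)) ≠ 0 := denom_ne_zero _ hδ10 hz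
  have hBden : ((Bm 1 0 : ℂ) * z + (Bm 1 1 : ℂ)) ≠ 0 := denom_ne_zero _ Bm_c_ne hz
  have step1 : stroke (2*m) δ (stroke (2*m) Bm f) z = stroke (2*m) (Bm * δ) f z :=
    stroke_comp _ _ _ _ _ hδden (by rw [hM]; exact hprodneg)
  rw [step1, hM, stroke_neg (2*m) (even_two_mul m) _ f z,
    ← stroke_comp _ _ _ f z hBden hprod]
  apply stroke_factor
  have hw : 0 < (((Bm 0 0 : ℂ) * z + (Bm 0 1 : ℂ)) / ((Bm 1 0 : ℂ) * z + (Bm 1 1 : ℂ))).im :=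
    mobius_im_pos (Bm 0 0) (Bm 0 1) (Bm 1 0) (Bm 1 1) Bm_det_pos hz hBden
  have hw0 : (((Bm 0 0 : ℂ) * z + (Bm 0 1 : ℂ)) / ((Bm 1 0 : ℂ) * z + (Bm 1 1 : ℂ))) ≠ 0 := by
    intro h0; rw [h0] at hw; simp at hw
  exact stroke_S m b c hb hc C _ hw0

/-- With `g̃(z) = C·z^{-k/2}|ₖA⁻¹` (principal branch), one has
`g̃|δ₁ = (-1)^{k/2} g̃`, `g̃|δ₂ = (-1)^{k/2} g̃` and `g̃|δ₃ = (-1)^{3k/2} g̃`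
on the upper half-plane, for every positive even `k` and every constant `C`. -/
theorem gtilde_transformation (k : ℕ) (hk : 0 < k) (hke : Even k) (C : ℂ) :
    let gt : ℂ → ℂ := stroke k A⁻¹ (fun z => C * z ^ (-(k : ℂ) / 2))
    (∀ z : ℂ, 0 < z.im → stroke k δ₁ gt z = (-1 : ℂ) ^ (k / 2) * gt z) ∧
    (∀ z : ℂ, 0 < z.im → stroke k δ₂ gt z = (-1 : ℂ) ^ (k / 2) * gt z) ∧
    (∀ z : ℂ, 0 < z.im → stroke k δ₃ gt z = (-1 : ℂ) ^ (3 * (k / 2)) * gt z) := by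
  obtain ⟨m, hm⟩ := hke
  have h2m : k = 2 * m := by omega
  subst h2m
  intro gt
  have hgt : gt = stroke (2*m) Bm (fun w => C * w ^ (-((2*m : ℕ) : ℂ) / 2)) := by
    show stroke (2*m) A⁻¹ _ = _
    rw [A_inv]
  have hmdiv : 2 * m / 2 = m := by omega
  have hp := hsp
  have h13 := hs2
  refine ⟨?_, ?_, ?_⟩ <;> intro z hz <;> rw [hgt, hmdiv]
  · exact case_main m C δ₁ 1 1 one_ne_zero one_ne_zero
      (by norm_num [δ₁]) prod1 z hz
  · exact case_main m C δ₂ ((Real.sqrt 13 + 2)/3) ((Real.sqrt 13 - 2)/3)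
      (by positivity) (by intro h; nlinarith [h13, hp]) (by norm_num [δ₂]) prod2 z hz
  · have hpow3 : ((-1 : ℂ)) ^ (3 * m) = (-1 : ℂ) ^ m := by
      rw [pow_mul]; norm_num
    rw [hpow3]
    exact case_main_neg m C δ₃ ((7 - Real.sqrt 13)/6) ((Real.sqrt 13 + 7)/6)
      (by intro h; nlinarith [h13, hp]) (by positivity) (by norm_num [δ₃]) prod3 z hz
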